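/- Let V ⊆ W be valuation domains with the same field of fractions, and suppose the residue field of W is finite. Then V = W. -/

import Mathlib

open scoped nonZeroDivisors


theorem valuation_subring_eq_of_finite_residue {K : Type*} [Field K] (V W : Subring K)
    (hVW : V ≤ W)
    (hV : ∀ x : K, x ≠ 0 → x ∈ V ∨ x⁻¹ ∈ V)
    (hW : ∀ x : K, x ≠ 0 → x ∈ W ∨ x⁻¹ ∈ W)
    (hfin : ∃ M : Ideal W, M.IsMaximal ∧ Finite (W ⧸ M)) :
    V = W := by
  obtain ⟨M, hM, hfinM⟩ := hfin
  haveI := Fintype.ofFinite (W ⧸ M)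
  haveI : Fintype (W ⧸ M)ˣ := Fintype.ofFinite _
  refine le_antisymm hVW fun x hx => ?_
  by_contra hxV
  have hx0 : x ≠ 0 := fun h => hxV (h ▸ V.zero_mem)
  have hxi : x⁻¹ ∈ V := (hV x hx0).resolve_left hxV
  have hxiW : x⁻¹ ∈ W := hVW hxi
  set n := Fintype.card (W ⧸ M)ˣ with hn
  have hn1 : 1 ≤ n := Fintype.card_pos
  set w : W := ⟨x, hx⟩ with hw
  set wi : W := ⟨x⁻¹, hxiW⟩ with hwi
  have hwwi : w * wi = 1 := Subtype.ext (by simp [hw, hwi, mul_inv_cancel₀ hx0])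
  have hmul : (Ideal.Quotient.mk M w) * (Ideal.Quotient.mk M wi) = 1 := by
    rw [← map_mul, hwwi, map_one]
  obtain ⟨u, hu⟩ : IsUnit (Ideal.Quotient.mk M w) := IsUnit.of_mul_eq_one _ hmul
  have hpow : (Ideal.Quotient.mk M w) ^ n = 1 := by
    rw [← hu, ← Units.val_pow_eq_pow_val, pow_card_eq_one, Units.val_one]
  have hz : w ^ n - 1 ∈ M := by
    rw [← Ideal.Quotient.eq_zero_iff_mem, RingHom.map_sub, RingHom.map_pow, RingHom.map_one, hpow, sub_self]
  set zW : W := w ^ n - 1 with hzWdef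
  have hzK : (zW : K) = x ^ n - 1 := by push_cast [hzWdef, hw]; ring
  set z : K := x ^ n - 1 with hzdef
  have hzW : z ∈ W := hzK ▸ zW.2
  have hzV : z ∈ V := by
    by_cases hz0 : z = 0
    · rw [hz0]; exact V.zero_mem
    · by_contra hzVnot
      have hzi : z⁻¹ ∈ V := (hV z hz0).resolve_left hzVnot
      have h1 : zW * ⟨z⁻¹, hVW hzi⟩ = 1 :=
        Subtype.ext (by
          rw [Subring.coe_mul, hzK]
          show z * z⁻¹ = ((1 : W) : K)
          rw [Subring.coe_one, mul_inv_cancel₀ hz0])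
      exact hM.ne_top (M.eq_top_iff_one.mpr (h1 ▸ M.mul_mem_right _ hz))
  have hxq : x ^ n ∈ V := by
    have h : x ^ n = 1 + z := by rw [hzdef]; ring
    rw [h]; exact V.add_mem V.one_mem hzV
  have hx_eq : x ^ n * (x⁻¹) ^ (n - 1) = x := by
    have key : ∀ m : ℕ, 1 ≤ m → x ^ m * (x⁻¹) ^ (m - 1) = x := by
      intro m hm
      obtain ⟨k, rfl⟩ : ∃ k, m = k + 1 := ⟨m - 1, by omega⟩
      rw [Nat.add_sub_cancel, pow_succ', mul_assoc, ← mul_pow,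
        mul_inv_cancel₀ hx0, one_pow, mul_one]
    exact key n hn1
  exact hxV (by rw [← hx_eq]; exact V.mul_mem hxq (V.pow_mem hxi _))
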